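/- Let I be an ideal on ℕ which has the hereditary Baire property. Then there exists a closed ℝ-submodule V of ℓ∞ such that every element of V other than 0 has a set of I-cluster points of cardinality continuum (i.e. ↑V ⊆ {x ∈ ℓ∞ | Cardinal.mk ↥(L_I(x)) = Cardinal.continuum} ∪ {0}), and every subset D ⊆ ↑V that is dense in V has cardinality at least Cardinal.continuum (so V is a closed subspace of density continuum). -/

import Mathlib

open scoped ENNReal

/-- `I` is an ideal on `ℕ`: closed under subsets and finite unions, contains singletons,
and does not contain `ℕ` itself. -/
def IsNatIdeal (I : Set (Set ℕ)) : Prop :=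
  (∀ A B : Set ℕ, A ⊆ B → B ∈ I → A ∈ I) ∧
  (∀ A B : Set ℕ, A ∈ I → B ∈ I → A ∪ B ∈ I) ∧
  (∀ n : ℕ, ({n} : Set ℕ) ∈ I) ∧
  (Set.univ : Set ℕ) ∉ I

/-- A set has the Baire property if it differs from an open set by a meagre set. -/
def HasBaireProperty {α : Type*} [TopologicalSpace α] (S : Set α) : Prop :=
  ∃ O : Set α, IsOpen O ∧ IsMeagre (symmDiff S O)

/-- An ideal on `ℕ` has the hereditary Baire property if its restriction to any `X ∉ I`
has the Baire property in the Cantor space `↥X → Bool`. -/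
def IdealHasHereditaryBaireProperty (I : Set (Set ℕ)) : Prop :=
  ∀ X : Set ℕ, X ∉ I →
    HasBaireProperty {χ : ↥X → Bool | {n : ℕ | ∃ h : n ∈ X, χ ⟨n, h⟩ = true} ∈ I}

/-- The set of `I`-cluster points of a bounded sequence `x ∈ ℓ∞`. -/
def IClusterPts (I : Set (Set ℕ)) (x : lp (fun _ : ℕ => ℝ) ∞) : Set ℝ :=
  {t : ℝ | ∀ ε > (0 : ℝ), {n : ℕ | |x n - t| ≤ ε} ∉ I}

open Set
open scoped ENNReal


abbrev Omega := ℕ → Bool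

/-- basic cylinder -/
def cyl (σ : Omega) (m : ℕ) : Set Omega := {χ | ∀ n, n < m → χ n = σ n}

lemma cyl_isOpen (σ : Omega) (m : ℕ) : IsOpen (cyl σ m) := by
  have : cyl σ m = ⋂ n ∈ Finset.range m, (fun χ : Omega => χ n) ⁻¹' {σ n} := by
    ext χ
    simp only [cyl, mem_setOf_eq, mem_iInter, Finset.mem_range, mem_preimage,
      mem_singleton_iff]
  rw [this]
  exact isOpen_biInter_finset fun n _ =>
    (isOpen_discrete ({σ n} : Set Bool)).preimage (continuous_apply n)

lemma self_mem_cyl (σ : Omega) (m : ℕ) : σ ∈ cyl σ m := fun _ _ => rfl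

lemma exists_cyl_subset {O : Set Omega} (hO : IsOpen O) {χ : Omega} (hχ : χ ∈ O) :
    ∃ m, cyl χ m ⊆ O := by
  obtain ⟨F, u, hu, hsub⟩ := isOpen_pi_iff.mp hO χ hχ
  rcases F.bddAbove with ⟨m, hm⟩
  refine ⟨m + 1, fun ψ hψ => hsub ?_⟩
  intro a ha
  have : ψ a = χ a := hψ a (Nat.lt_succ_of_le (hm ha))
  rw [this]; exact (hu a ha).2

lemma ext_step {U : Set Omega} (hUo : IsOpen U) (hUd : Dense U) (σ : Omega) (m : ℕ) :
    ∃ (σ' : Omega) (m' : ℕ), m ≤ m' ∧ (∀ n, n < m → σ' n = σ n) ∧ cyl σ' m' ⊆ U := by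
  obtain ⟨ψ, hψU, hψc⟩ := hUd.exists_mem_open (cyl_isOpen σ m) ⟨σ, self_mem_cyl σ m⟩
  obtain ⟨m₀, hm₀⟩ := exists_cyl_subset hUo hψU
  refine ⟨ψ, max m m₀, le_max_left _ _, hψc, fun χ hχ => hm₀ fun n hn => ?_⟩
  exact hχ n (lt_of_lt_of_le hn (le_max_right _ _))

/-- iterate extension over a list of stubs -/
lemma fold_step {W : Set Omega} (hWo : IsOpen W) (hWd : Dense W) (m₀ : ℕ) :
    ∀ (L : List Omega) (m : ℕ) (τ : Omega), m₀ ≤ m →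
      ∃ (m' : ℕ) (τ' : Omega), m ≤ m' ∧ (∀ n, m₀ ≤ n → n < m → τ' n = τ n) ∧
        ∀ u ∈ L, ∀ χ : Omega, (∀ n, n < m₀ → χ n = u n) →
          (∀ n, m₀ ≤ n → n < m' → χ n = τ' n) → χ ∈ W := by
  intro L
  induction L with
  | nil => exact fun m τ hm => ⟨m, τ, le_rfl, fun _ _ _ => rfl, by simp⟩
  | cons u L ih =>
    intro m τ hm
    obtain ⟨m₁, τ₁, hm₁, hagree₁, hprop₁⟩ := ih m τ hm
    set base : Omega := fun n => if n < m₀ then u n else τ₁ n with hbase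
    obtain ⟨σ', m₂, hm₂, hagree₂, hsub₂⟩ := ext_step hWo hWd base m₁
    refine ⟨m₂, σ', le_trans hm₁ hm₂, ?_, ?_⟩
    · intro n hn₀ hn
      have h1 : σ' n = base n := hagree₂ n (lt_of_lt_of_le hn hm₁)
      rw [h1, hbase]; simp only [if_neg (not_lt.mpr hn₀)]
      exact hagree₁ n hn₀ hn
    · intro v hv χ hχlow hχmid
      rcases List.mem_cons.mp hv with rfl | hvL
      · refine hsub₂ fun n hn => ?_
        by_cases hn₀ : n < m₀
        · rw [hχlow n hn₀, hagree₂ n (lt_of_lt_of_le hn₀ (le_trans hm hm₁))]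
          simp [hbase, hn₀]
        · exact hχmid n (not_lt.mp hn₀) hn
      · refine hprop₁ v hvL χ hχlow fun n hn₀ hn => ?_
        have : χ n = σ' n := hχmid n hn₀ (lt_of_lt_of_le hn hm₂)
        rw [this, hagree₂ n hn]
        simp [hbase, not_lt.mpr hn₀, Nat.not_lt.mpr hn₀]

/-- stage lemma: a block of coordinates forcing membership in `W` -/
lemma stage {W : Set Omega} (hWo : IsOpen W) (hWd : Dense W) (m₀ : ℕ) :
    ∃ (m₁ : ℕ) (σ : Omega), m₀ < m₁ ∧ σ (m₁ - 1) = true ∧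
      ∀ χ : Omega, (∀ n, m₀ ≤ n → n < m₁ → χ n = σ n) → χ ∈ W := by
  classical
  set L : List Omega := (Finset.univ : Finset (Fin m₀ → Bool)).toList.map
    (fun u => fun n => if h : n < m₀ then u ⟨n, h⟩ else false) with hL
  obtain ⟨m', τ', hm', _, hprop⟩ := fold_step hWo hWd m₀ L m₀ (fun _ => false) le_rfl
  refine ⟨m' + 1, fun n => if n = m' then true else τ' n, Nat.lt_succ_of_le hm', by simp, ?_⟩
  intro χ hχ
  set u : Omega := fun n => if h : n < m₀ then χ n else false with hu
  have huL : u ∈ L := by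
    rw [hL]
    refine List.mem_map.mpr ⟨fun i => χ i, Finset.mem_toList.mpr (Finset.mem_univ _), ?_⟩
    funext n; by_cases h : n < m₀ <;> simp [hu, h]
  refine hprop u huL χ (fun n hn => by simp [hu, hn]) (fun n hn₀ hn => ?_)
  have h1 := hχ n hn₀ (lt_of_lt_of_le hn (Nat.le_succ _))
  have h2 : n ≠ m' := Nat.ne_of_lt hn
  rw [h1]; simp [h2]


lemma talagrand_core {S : Set Omega} (hS : IsMeagre S) :
    ∃ (m : ℕ → ℕ) (σ : ℕ → Omega), StrictMono m ∧ m 0 = 0 ∧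
      (∀ k, σ k (m (k + 1) - 1) = true) ∧
      ∀ χ : Omega, {k | ∀ n, m k ≤ n → n < m (k + 1) → χ n = σ k n}.Infinite → χ ∉ S := by
  obtain ⟨C, hnwd, hcount, hsub⟩ := isMeagre_iff_countable_union_isNowhereDense.mp hS
  have hne : (insert (∅ : Set Omega) C).Nonempty := ⟨∅, Set.mem_insert _ _⟩
  obtain ⟨f, hf⟩ := Set.Countable.exists_eq_range (hcount.insert ∅) hne
  have hfnwd : ∀ i, IsNowhereDense (f i) := by
    intro i
    have : f i ∈ insert (∅ : Set Omega) C := hf ▸ Set.mem_range_self i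
    rcases this with h | h
    · rw [h]; exact isNowhereDense_empty
    · exact hnwd _ h
  set U : ℕ → Set Omega := fun i => (closure (f i))ᶜ with hU
  have hUo : ∀ i, IsOpen (U i) := fun i => isClosed_closure.isOpen_compl
  have hUd : ∀ i, Dense (U i) := by
    intro i
    rw [hU]
    have := (hfnwd i).closure
    rw [IsNowhereDense, closure_closure] at this
    exact interior_eq_empty_iff_dense_compl.mp this
  set W : ℕ → Set Omega := fun k => ⋂ i ∈ Finset.range (k + 1), U i with hW
  have hWo : ∀ k, IsOpen (W k) := fun k => isOpen_biInter_finset fun i _ => hUo i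
  have hWd : ∀ k, Dense (W k) := by
    intro k
    induction k with
    | zero => simpa [hW] using hUd 0
    | succ k ih =>
      have : W (k + 1) = U (k + 1) ∩ W k := by
        rw [hW]
        simp only [Finset.range_add_one, Finset.mem_insert, Set.iInter_iInter_eq_or_left]
      rw [this]
      exact (hUd (k + 1)).inter_of_isOpen_left ih (hUo (k + 1))
  have hstage : ∀ k m₀, ∃ (m₁ : ℕ) (σ : Omega), m₀ < m₁ ∧ σ (m₁ - 1) = true ∧
      ∀ χ : Omega, (∀ n, m₀ ≤ n → n < m₁ → χ n = σ n) → χ ∈ W k :=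
    fun k m₀ => stage (hWo k) (hWd k) m₀
  choose F G hF hG hprop using hstage
  set m : ℕ → ℕ := fun k => Nat.rec 0 (fun k mk => F k mk) k with hm
  have hmsucc : ∀ k, m (k + 1) = F k (m k) := fun k => rfl
  have hmono : StrictMono m :=
    strictMono_nat_of_lt_succ fun k => (hmsucc k) ▸ hF k (m k)
  refine ⟨m, fun k => G k (m k), hmono, rfl, fun k => (hmsucc k) ▸ hG k (m k), ?_⟩
  intro χ hinf hmem
  have hnotin : ∀ i, χ ∈ U i := by
    intro i
    obtain ⟨k, hk, hik⟩ := hinf.exists_gt i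
    have hχW : χ ∈ W k := hprop k (m k) χ fun n h1 h2 => hk n h1 ((hmsucc k) ▸ h2)
    rw [hW] at hχW
    exact Set.mem_iInter₂.mp hχW i (Finset.mem_range.mpr (Nat.lt_succ_of_le hik.le))
  obtain ⟨c, hcC, hχc⟩ := hsub hmem
  obtain ⟨i, hi⟩ := hf ▸ (Set.mem_insert_of_mem _ hcC : c ∈ insert ∅ C)
  exact hnotin i (subset_closure (hi ▸ hχc))

lemma blocks_of_meagre {I : Set (Set ℕ)} (hI : IsNatIdeal I)
    (hmeag : IsMeagre {χ : Omega | {n | χ n = true} ∈ I}) :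
    ∃ (blk : ℕ → ℕ) (E : ℕ → Set ℕ),
      (∀ k, (E k).Nonempty) ∧ (∀ k n, n ∈ E k → blk n = k) ∧
      ∀ X : Set ℕ, {k | E k ⊆ X}.Infinite → X ∉ I := by
  classical
  obtain ⟨m, σ, hmono, hm0, htrue, hkey⟩ := talagrand_core hmeag
  set E : ℕ → Set ℕ := fun k => {n | m k ≤ n ∧ n < m (k + 1) ∧ σ k n = true} with hE
  set blk : ℕ → ℕ := fun n => Nat.findGreatest (fun k => m k ≤ n) n with hblk
  have hblk_eq : ∀ k n, m k ≤ n → n < m (k + 1) → blk n = k := by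
    intro k n h1 h2
    rw [hblk]
    rw [Nat.findGreatest_eq_iff]
    refine ⟨le_trans hmono.le_apply h1, fun _ => h1, fun j hj hjn hmj => ?_⟩
    exact absurd (le_trans (hmono.monotone hj) hmj) (not_le.mpr h2)
  have hEblk : ∀ k n, n ∈ E k → blk n = k := fun k n hn => hblk_eq k n hn.1 hn.2.1
  have hEne : ∀ k, (E k).Nonempty := by
    intro k
    have hlt : m k < m (k + 1) := hmono (Nat.lt_succ_self k)
    have hpos : 0 < m (k + 1) := Nat.pos_of_ne_zero fun h => by omega
    refine ⟨m (k + 1) - 1, Nat.le_sub_one_of_lt hlt, Nat.sub_lt hpos one_pos, htrue k⟩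
  refine ⟨blk, E, hEne, hEblk, ?_⟩
  intro X hinf hXI
  set K : Set ℕ := {k | E k ⊆ X} with hK
  set Y : Set ℕ := {n | ∃ k ∈ K, n ∈ E k} with hY
  set χ : Omega := fun n => if n ∈ Y then true else false with hχ
  have hχiff : ∀ n, χ n = true ↔ n ∈ Y := by
    intro n; rw [hχ]; by_cases h : n ∈ Y <;> simp [h]
  have hagree : ∀ k ∈ K, ∀ n, m k ≤ n → n < m (k + 1) → χ n = σ k n := by
    intro k hk n h1 h2
    by_cases hs : σ k n = true
    · rw [hs, hχiff]
      exact ⟨k, hk, h1, h2, hs⟩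
    · rw [Bool.not_eq_true] at hs
      rw [hs, ← Bool.not_eq_true, hχiff]
      rintro ⟨j, hjK, hjE⟩
      have : j = k := by rw [← hEblk j _ hjE, hblk_eq k _ h1 h2]
      subst this
      exact absurd hjE.2.2 (by simp [hs])
  have hKsub : K ⊆ {k | ∀ n, m k ≤ n → n < m (k + 1) → χ n = σ k n} :=
    fun k hk => hagree k hk
  have hχnot : χ ∉ {χ : Omega | {n | χ n = true} ∈ I} := hkey χ (hinf.mono hKsub)
  apply hχnot
  have hYX : Y ⊆ X := by rintro n ⟨k, hk, hn⟩; exact hk hn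
  have : {n | χ n = true} = Y := Set.ext fun n => hχiff n
  show {n | χ n = true} ∈ I
  rw [this]
  exact hI.1 Y X hYX hXI


lemma natIdeal_finite_mem {I : Set (Set ℕ)} (hI : IsNatIdeal I) {A : Set ℕ}
    (hA : A.Finite) : A ∈ I := by
  have hseg : ∀ N : ℕ, {n | n < N} ∈ I := by
    intro N
    induction N with
    | zero => exact hI.1 _ {0} (by intro n hn; simp at hn) (hI.2.2.1 0)
    | succ N ih =>
      have : {n | n < N + 1} = {n | n < N} ∪ {N} := by
        ext n; simp [Nat.lt_succ_iff_lt_or_eq]; omega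
      rw [this]
      exact hI.2.1 _ _ ih (hI.2.2.1 N)
  obtain ⟨N, hN⟩ := hA.bddAbove
  exact hI.1 A {n | n < N + 1} (fun a ha => Nat.lt_succ_of_le (hN ha)) (hseg (N + 1))

lemma tail_invariant {I : Set (Set ℕ)} (hI : IsNatIdeal I) (m : ℕ) {χ ψ : Omega}
    (h : ∀ n, m ≤ n → χ n = ψ n) :
    {n | χ n = true} ∈ I ↔ {n | ψ n = true} ∈ I := by
  have key : ∀ χ ψ : Omega, (∀ n, m ≤ n → χ n = ψ n) →
      {n | χ n = true} ∈ I → {n | ψ n = true} ∈ I := by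
    intro χ ψ h hχ
    refine hI.1 _ ({n | χ n = true} ∪ {n | n < m}) (fun n hn => ?_)
      (hI.2.1 _ _ hχ (natIdeal_finite_mem hI (Set.finite_lt_nat m)))
    by_cases hm : m ≤ n
    · exact Or.inl (by rw [Set.mem_setOf_eq, h n hm]; exact hn)
    · exact Or.inr (not_le.mp hm)
  exact ⟨key χ ψ h, key ψ χ fun n hn => (h n hn).symm⟩

lemma cont_coordwise (g : ℕ → Bool → Bool) :
    Continuous (fun χ : Omega => fun n => g n (χ n)) :=
  continuous_pi fun n =>
    Continuous.comp (continuous_of_discreteTopology (f := g n)) (continuous_apply n)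

/-- flip homeomorphism on finitely many coordinates -/
noncomputable def flipHomeo (τ χ₀ : Omega) (m : ℕ) : Omega ≃ₜ Omega := by
  classical
  refine Homeomorph.mk (Function.Involutive.toPerm
    (fun χ => fun n => if n < m then (χ n != (τ n != χ₀ n)) else χ n) ?_) ?_ ?_
  · intro χ; funext n
    by_cases h : n < m <;> simp [h]
  · exact cont_coordwise fun n b => if n < m then (b != (τ n != χ₀ n)) else b
  · exact cont_coordwise fun n b => if n < m then (b != (τ n != χ₀ n)) else b

/-- the coordinatewise complement homeomorphism -/
def complHomeo : Omega ≃ₜ Omega where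
  toEquiv := Function.Involutive.toPerm (fun χ => fun n => !χ n)
    (fun χ => by funext n; simp)
  continuous_toFun := cont_coordwise fun _ b => !b
  continuous_invFun := cont_coordwise fun _ b => !b

lemma meagre_of_BP {I : Set (Set ℕ)} (hI : IsNatIdeal I)
    (hBP : HasBaireProperty {χ : Omega | {n | χ n = true} ∈ I}) :
    IsMeagre {χ : Omega | {n | χ n = true} ∈ I} := by
  classical
  set S : Set Omega := {χ : Omega | {n | χ n = true} ∈ I} with hS
  obtain ⟨O, hOo, hOm⟩ := hBP
  rcases Set.eq_empty_or_nonempty O with rfl | ⟨χ₀, hχ₀⟩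
  · rwa [show (∅ : Set Omega) = ⊥ from rfl, symmDiff_bot] at hOm
  obtain ⟨m, hcylO⟩ := exists_cyl_subset hOo hχ₀
  -- each translated cylinder minus S is meagre
  have h2 : ∀ τ : Omega, IsMeagre (cyl τ m \ S) := by
    intro τ
    set F := flipHomeo τ χ₀ m with hF
    have hFdef : ∀ χ n, F χ n = if n < m then (χ n != (τ n != χ₀ n)) else χ n := fun χ n => rfl
    have hsub : cyl τ m \ S ⊆ ⇑F ⁻¹' (cyl χ₀ m \ S) := by
      rintro χ ⟨hχc, hχS⟩
      constructor
      · intro n hn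
        rw [hFdef, if_pos hn, hχc n hn]
        cases τ n <;> cases χ₀ n <;> simp
      · intro hFS
        refine hχS ?_
        rw [hS, Set.mem_setOf_eq] at hFS ⊢
        rw [tail_invariant hI m (χ := χ) (ψ := F χ) fun n hn => by
          rw [hFdef, if_neg (not_lt.mpr hn)]]
        exact hFS
    have hpre : IsMeagre (⇑F ⁻¹' (cyl χ₀ m \ S)) :=
      (hOm.mono fun x hx => by
        rw [Set.mem_symmDiff]; exact Or.inr ⟨hcylO hx.1, hx.2⟩).preimage_of_isOpenMap
        F.continuous F.isOpenMap
    exact hpre.mono hsub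
  -- the complement of S is meagre
  have h3 : IsMeagre Sᶜ := by
    have hcover : Sᶜ ⊆ ⋃ u : Fin m → Bool,
        (cyl (fun n => if h : n < m then u ⟨n, h⟩ else false) m \ S) := by
      intro χ hχ
      exact Set.mem_iUnion.mpr ⟨fun i => χ i, ⟨fun n hn => by simp [hn], hχ⟩⟩
    refine IsMeagre.mono hcover ?_
    rw [IsMeagre, Set.compl_iUnion]
    exact countable_iInter_mem.mpr fun u => h2 _
  -- complement homeomorphism
  have hSres : S ∈ residual Omega := by rwa [IsMeagre, compl_compl] at h3
  have hCpre : IsMeagre ((⇑complHomeo ⁻¹' S)ᶜ) := by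
    have := h3.preimage_of_isOpenMap complHomeo.continuous complHomeo.isOpenMap
    rwa [Set.preimage_compl] at this
  have hCres : (⇑complHomeo ⁻¹' S) ∈ residual Omega := by
    rwa [IsMeagre, compl_compl] at hCpre
  have hG : (S ∩ ⇑complHomeo ⁻¹' S).Nonempty :=
    (dense_of_mem_residual (Filter.inter_mem hSres hCres)).nonempty
  obtain ⟨χ, hχ1, hχ2⟩ := hG
  exfalso
  apply hI.2.2.2
  have hCχ : {n | (!χ n) = true} ∈ I := hχ2
  have huniv : (Set.univ : Set ℕ) ⊆ {n | χ n = true} ∪ {n | (!χ n) = true} := by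
    intro n _
    cases h : χ n
    · exact Or.inr (by simp [h])
    · exact Or.inl h
  exact hI.1 _ _ huniv (hI.2.1 _ _ hχ1 hCχ)

noncomputable section AnalyticPart

open Cardinal

abbrev ellinf := lp (fun _ : ℕ => ℝ) ∞

def tripE : ℕ ≃ ℕ × ℕ × ℕ := (Denumerable.eqv (ℕ × ℕ × ℕ)).symm

def idxF (k : ℕ) : ℕ := (tripE k).1

def coefF (k : ℕ) : ℝ := min (((tripE k).2.1 : ℝ) / ((tripE k).2.2 + 1)) 1

lemma coefF_mem (k : ℕ) : coefF k ∈ Set.Icc (0 : ℝ) 1 := by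
  constructor
  · exact le_min (by positivity) zero_le_one
  · exact min_le_right _ _

lemma idxF_mk (i j l : ℕ) : idxF (tripE.symm (i, j, l)) = i := by
  simp [idxF]

lemma coefF_mk (i j l : ℕ) :
    coefF (tripE.symm (i, j, l)) = min ((j : ℝ) / (l + 1)) 1 := by
  simp [coefF]

lemma coefF_one (i : ℕ) : coefF (tripE.symm (i, 1, 0)) = 1 := by
  rw [coefF_mk]; norm_num

/-- The raw embedding map. -/
def Traw (blk : ℕ → ℕ) (y : ℕ → ℝ) : ℕ → ℝ := fun n => y (idxF (blk n)) * coefF (blk n)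

lemma Traw_bound (blk : ℕ → ℕ) (y : ellinf) (n : ℕ) : ‖Traw blk (⇑y) n‖ ≤ ‖y‖ := by
  rw [Traw, norm_mul]
  calc ‖y (idxF (blk n))‖ * ‖coefF (blk n)‖ ≤ ‖y‖ * 1 := by
        refine mul_le_mul (lp.norm_apply_le_norm (by simp) y _) ?_ (norm_nonneg _)
          (norm_nonneg _)
        rw [Real.norm_eq_abs, abs_le]
        exact ⟨le_trans (by norm_num) (coefF_mem (blk n)).1, (coefF_mem (blk n)).2⟩
    _ = ‖y‖ := mul_one _

lemma Traw_memℓp (blk : ℕ → ℕ) (y : ellinf) : Memℓp (Traw blk (⇑y)) ∞ := by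
  refine memℓp_infty ⟨‖y‖, ?_⟩
  rintro r ⟨n, rfl⟩
  exact Traw_bound blk y n

/-- The embedding as a linear map on `ℓ∞`. -/
def Tlin (blk : ℕ → ℕ) : ellinf →ₗ[ℝ] ellinf where
  toFun y := ⟨Traw blk (⇑y), Traw_memℓp blk y⟩
  map_add' y z := by
    apply lp.ext
    funext n
    simp only [lp.coeFn_add, Pi.add_apply]
    show Traw blk (⇑(y + z)) n = Traw blk (⇑y) n + Traw blk (⇑z) n
    simp only [Traw, lp.coeFn_add, Pi.add_apply]
    ring
  map_smul' c y := by
    apply lp.ext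
    funext n
    simp only [RingHom.id_apply, lp.coeFn_smul, Pi.smul_apply]
    show Traw blk (⇑(c • y)) n = c • Traw blk (⇑y) n
    simp only [Traw, lp.coeFn_smul, Pi.smul_apply, smul_eq_mul]
    ring

lemma Tlin_apply (blk : ℕ → ℕ) (y : ellinf) (n : ℕ) :
    (Tlin blk y) n = (⇑y) (idxF (blk n)) * coefF (blk n) := rfl

lemma Tlin_norm (blk : ℕ → ℕ) (hsurj : ∀ k, ∃ n, blk n = k) (y : ellinf) :
    ‖Tlin blk y‖ = ‖y‖ := by
  refine le_antisymm (lp.norm_le_of_forall_le (norm_nonneg y) fun n => Traw_bound blk y n) ?_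
  refine lp.norm_le_of_forall_le (norm_nonneg _) fun i => ?_
  obtain ⟨n, hn⟩ := hsurj (tripE.symm (i, 1, 0))
  have : (Tlin blk y) n = (⇑y) i := by
    rw [Tlin_apply, hn, idxF_mk, coefF_one, mul_one]
  calc ‖(⇑y) i‖ = ‖(Tlin blk y) n‖ := by rw [this]
    _ ≤ ‖Tlin blk y‖ := lp.norm_apply_le_norm (by simp) _ _

end AnalyticPart

section Cluster

open Set

lemma exists_block_freq {i : ℕ} {t δ : ℝ} (ht : t ∈ Set.Icc (0:ℝ) 1) (hδ : 0 < δ) :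
    {k | idxF k = i ∧ |coefF k - t| ≤ δ}.Infinite := by
  obtain ⟨L, hL⟩ := exists_nat_one_div_lt hδ
  set f : ℕ → ℕ := fun l => tripE.symm (i, ⌊t * (L + l + 1)⌋₊, L + l) with hf
  refine Set.infinite_of_injective_forall_mem (f := f) ?_ ?_
  · intro a b hab
    rw [hf] at hab
    have := tripE.symm.injective hab
    simpa using (Prod.ext_iff.mp (Prod.ext_iff.mp this).2).2
  · intro l
    constructor
    · rw [hf]; exact idxF_mk _ _ _
    · rw [hf, coefF_mk]
      have ht0 : (0:ℝ) ≤ t := ht.1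
      have hcast : ((L + l : ℕ) : ℝ) = (L : ℝ) + l := by push_cast; ring
      have hpos : (0:ℝ) < ((L + l : ℕ) : ℝ) + 1 := by positivity
      have hfl_le : (⌊t * (L + l + 1)⌋₊ : ℝ) ≤ t * ((L:ℝ) + l + 1) :=
        Nat.floor_le (mul_nonneg ht0 (by positivity))
      have hfl_gt : t * ((L:ℝ) + l + 1) < (⌊t * (L + l + 1)⌋₊ : ℝ) + 1 :=
        Nat.lt_floor_add_one _
      set q : ℝ := (⌊t * (L + l + 1)⌋₊ : ℝ) / (((L + l : ℕ) : ℝ) + 1) with hq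
      have hquot_le_t : q ≤ t := by
        rw [hq, div_le_iff₀ hpos, hcast]
        calc (⌊t * (L + l + 1)⌋₊ : ℝ) ≤ t * ((L:ℝ) + l + 1) := hfl_le
          _ = t * ((L:ℝ) + l + 1) := by ring
      have hmin : min q 1 = q := min_eq_left (le_trans hquot_le_t ht.2)
      rw [hmin, abs_le]
      have hdiff : t - q ≤ 1 / (((L + l : ℕ) : ℝ) + 1) := by
        rw [sub_le_iff_le_add, hq, ← add_div, le_div_iff₀ hpos, hcast]
        linarith
      have hmono : 1 / (((L + l : ℕ) : ℝ) + 1) ≤ 1 / ((L:ℝ) + 1) := by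
        apply one_div_le_one_div_of_le (by positivity)
        rw [hcast]
        have : (0:ℝ) ≤ l := Nat.cast_nonneg l
        linarith
      have hlt : (1:ℝ) / ((L:ℝ) + 1) < δ := hL
      constructor
      · linarith
      · linarith [hδ.le]

end Cluster

lemma cluster_mem {I : Set (Set ℕ)} (blk : ℕ → ℕ) (E : ℕ → Set ℕ)
    (hEblk : ∀ k n, n ∈ E k → blk n = k)
    (hkey : ∀ X : Set ℕ, {k | E k ⊆ X}.Infinite → X ∉ I)
    (y : ellinf) (i : ℕ) {t : ℝ} (ht : t ∈ Set.Icc (0:ℝ) 1) :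
    ((⇑y) i * t) ∈ IClusterPts I (Tlin blk y) := by
  intro ε hε
  set δ := ε / (|(⇑y) i| + 1) with hδdef
  have hδ : 0 < δ := div_pos hε (by positivity)
  apply hkey
  have hfreq := exists_block_freq (i := i) ht hδ
  refine Set.Infinite.mono ?_ hfreq
  rintro k ⟨hik, hck⟩ n hn
  have hb : blk n = k := hEblk k n hn
  show |(Tlin blk y) n - (⇑y) i * t| ≤ ε
  rw [Tlin_apply, hb, hik, ← mul_sub, abs_mul]
  have h1 : |(⇑y) i| * |coefF k - t| ≤ |(⇑y) i| * δ :=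
    mul_le_mul_of_nonneg_left hck (abs_nonneg _)
  have h2 : |(⇑y) i| * δ ≤ (|(⇑y) i| + 1) * δ := by
    have := hδ.le; nlinarith
  have h3 : (|(⇑y) i| + 1) * δ = ε := by
    rw [hδdef, mul_div_cancel₀]
    positivity
  linarith

lemma BP_transport {I : Set (Set ℕ)}
    (h : HasBaireProperty {χ : ↥(Set.univ : Set ℕ) → Bool |
      {n : ℕ | ∃ hn : n ∈ (Set.univ : Set ℕ), χ ⟨n, hn⟩ = true} ∈ I}) :
    HasBaireProperty {χ : Omega | {n | χ n = true} ∈ I} := by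
  obtain ⟨O, hOo, hOm⟩ := h
  set H : ((↥(Set.univ : Set ℕ)) → Bool) ≃ₜ Omega :=
    Homeomorph.piCongrLeft (Y := fun _ : ℕ => Bool) (Equiv.Set.univ ℕ) with hH
  have happ : ∀ (χ : Omega) (n : ℕ) (hn : n ∈ (Set.univ : Set ℕ)),
      (⇑H.symm χ) ⟨n, hn⟩ = χ n := by
    intro χ n hn
    show (Equiv.piCongrLeft (fun _ => Bool) (Equiv.Set.univ ℕ)).symm χ ⟨n, hn⟩ = χ n
    rw [Equiv.piCongrLeft_symm_apply]
    rfl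
  have hset : ⇑H.symm ⁻¹' {χ : ↥(Set.univ : Set ℕ) → Bool |
      {n : ℕ | ∃ hn : n ∈ (Set.univ : Set ℕ), χ ⟨n, hn⟩ = true} ∈ I}
      = {χ : Omega | {n | χ n = true} ∈ I} := by
    ext χ
    simp only [Set.mem_preimage, Set.mem_setOf_eq]
    have : {n : ℕ | ∃ hn : n ∈ (Set.univ : Set ℕ), (⇑H.symm χ) ⟨n, hn⟩ = true}
        = {n | χ n = true} := by
      ext n
      simp only [Set.mem_setOf_eq, happ χ n (Set.mem_univ n)]
      exact ⟨fun ⟨_, h⟩ => h, fun h => ⟨Set.mem_univ n, h⟩⟩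
    rw [this]
  refine ⟨⇑H.symm ⁻¹' O, hOo.preimage H.symm.continuous, ?_⟩
  have : symmDiff ({χ : Omega | {n | χ n = true} ∈ I}) (⇑H.symm ⁻¹' O)
      = ⇑H.symm ⁻¹' (symmDiff {χ : ↥(Set.univ : Set ℕ) → Bool |
          {n : ℕ | ∃ hn : n ∈ (Set.univ : Set ℕ), χ ⟨n, hn⟩ = true} ∈ I} O) := by
    rw [← hset, Set.preimage_symmDiff]
  rw [this]
  exact hOm.preimage_of_isOpenMap H.symm.continuous H.symm.isOpenMap

/-- If an ideal `I` on `ℕ` has the hereditary Baire property, then the set of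
bounded sequences with continuum many `I`-cluster points contains, up to zero, a closed
subspace of `ℓ∞` of density continuum. -/
theorem stmt7 (I : Set (Set ℕ)) (hI : IsNatIdeal I)
    (hBP : IdealHasHereditaryBaireProperty I) :
    ∃ V : Submodule ℝ (lp (fun _ : ℕ => ℝ) ∞),
      IsClosed (V : Set (lp (fun _ : ℕ => ℝ) ∞)) ∧
      (V : Set (lp (fun _ : ℕ => ℝ) ∞)) ⊆
        {x | Cardinal.mk ↥(IClusterPts I x) = Cardinal.continuum} ∪ {0} ∧
      ∀ D : Set V, Dense D → Cardinal.continuum ≤ Cardinal.mk D := by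
  classical
  have hI' : IsNatIdeal I := hI
  -- Meagreness of the ideal in Cantor space
  have hmeag : IsMeagre {χ : Omega | {n | χ n = true} ∈ I} :=
    meagre_of_BP hI' (BP_transport (hBP Set.univ hI.2.2.2))
  -- Talagrand blocks
  obtain ⟨blk, E, hEne, hEblk, hkey⟩ := blocks_of_meagre hI' hmeag
  have hsurj : ∀ k, ∃ n, blk n = k := fun k => by
    obtain ⟨n, hn⟩ := hEne k; exact ⟨n, hEblk k n hn⟩
  set T := Tlin blk with hT
  have hnorm : ∀ y, ‖T y‖ = ‖y‖ := Tlin_norm blk hsurj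
  have hiso : Isometry ⇑T := AddMonoidHomClass.isometry_of_norm _ hnorm
  refine ⟨LinearMap.range T, ?_, ?_, ?_⟩
  · rw [LinearMap.coe_range]
    exact hiso.isClosedEmbedding.isClosed_range
  · -- cluster point condition
    rintro x hx
    rw [LinearMap.coe_range] at hx
    obtain ⟨y, rfl⟩ := hx
    by_cases hx0 : T y = 0
    · exact Or.inr hx0
    · left
      have hy0 : ¬ (⇑y = 0) := by
        intro h
        exact hx0 (by rw [show y = 0 from lp.ext h, map_zero])
      obtain ⟨i, hi⟩ : ∃ i, (⇑y) i ≠ 0 := by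
        by_contra h
        push_neg at h
        exact hy0 (funext h)
      show Cardinal.mk ↥(IClusterPts I (T y)) = Cardinal.continuum
      refine le_antisymm ((Cardinal.mk_set_le _).trans_eq Cardinal.mk_real) ?_
      have hinj : Function.Injective
          (fun s : ↥(Set.Icc (0:ℝ) 1) => (⟨(⇑y) i * s.1,
            cluster_mem blk E hEblk hkey y i s.2⟩ : ↥(IClusterPts I (T y)))) := by
        intro a b hab
        have := Subtype.ext_iff.mp hab
        exact Subtype.ext (mul_left_cancel₀ hi this)
      calc Cardinal.continuum = Cardinal.mk ↥(Set.Icc (0:ℝ) 1) :=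
            (Cardinal.mk_Icc_real zero_lt_one).symm
        _ ≤ Cardinal.mk ↥(IClusterPts I (T y)) := Cardinal.mk_le_of_injective hinj
  · -- density condition
    intro D hD
    have hIcc : ∀ A : Set ℕ, Memℓp (fun n => if n ∈ A then (1:ℝ) else 0) ∞ := by
      intro A
      refine memℓp_infty ⟨1, ?_⟩
      rintro r ⟨n, rfl⟩
      by_cases h : n ∈ A <;> simp [h]
    set χf : Set ℕ → ellinf := fun A => ⟨fun n => if n ∈ A then (1:ℝ) else 0, hIcc A⟩ with hχf
    set v : Set ℕ → ↥(LinearMap.range T) :=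
      fun A => ⟨T (χf A), LinearMap.mem_range_self T (χf A)⟩ with hv
    have hdist : ∀ A B : Set ℕ, A ≠ B → (1:ℝ) ≤ dist (v A) (v B) := by
      intro A B hAB
      rw [hv]
      rw [Subtype.dist_eq, dist_eq_norm, ← map_sub, hnorm]
      obtain ⟨n, hn⟩ : ∃ n, n ∈ symmDiff A B := by
        by_contra h
        push_neg at h
        exact hAB (by
          ext n
          have := h n
          rw [Set.mem_symmDiff] at this
          tauto)
      have : ‖(⇑(χf A - χf B)) n‖ = 1 := by
        rw [lp.coeFn_sub, Pi.sub_apply, hχf]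
        show ‖(if n ∈ A then (1:ℝ) else 0) - (if n ∈ B then (1:ℝ) else 0)‖ = 1
        rw [Set.mem_symmDiff] at hn
        rcases hn with ⟨h1, h2⟩ | ⟨h1, h2⟩ <;> simp [h1, h2]
      calc (1:ℝ) = ‖(⇑(χf A - χf B)) n‖ := this.symm
        _ ≤ ‖χf A - χf B‖ := lp.norm_apply_le_norm (by simp) _ _
    have hchoice : ∀ A : Set ℕ, ∃ d : ↥D, dist (v A) d.1 < 1/2 := by
      intro A
      have := Metric.mem_closure_iff.mp (hD (v A)) (1/2) (by norm_num)
      obtain ⟨d, hd, hdist'⟩ := this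
      exact ⟨⟨d, hd⟩, hdist'⟩
    choose dfun hdfun using hchoice
    have hinj : Function.Injective dfun := by
      intro A B hAB
      by_contra hne
      have h1 := hdfun A
      have h2 := hdfun B
      rw [hAB] at h1
      have h3 := hdist A B hne
      have h4 : dist (v A) (v B) ≤ dist (v A) (dfun B).1 + dist (dfun B).1 (v B) :=
        dist_triangle _ _ _
      rw [dist_comm (dfun B).1 (v B)] at h4
      linarith
    calc Cardinal.continuum = Cardinal.mk (Set ℕ) := by
          rw [Cardinal.mk_set, Cardinal.mk_nat, Cardinal.two_power_aleph0]
      _ ≤ Cardinal.mk ↥D := Cardinal.mk_le_of_injective hinj
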